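/- Let φ be an admissible error function. Then for all rational λ ∈ [0,1] and all u ∈ D_Δ, the series ∑_{k=0}^∞ 2^{−k}·φ*(d_ℤ(2^k·λ)·u) is absolutely convergent, and E[φ](λ, u) ≤ ∑_{k=0}^∞ 2^{−k}·φ*(d_ℤ(2^k·λ)·u). -/

import Mathlib

noncomputable section

/-- The distance of a real number to the set of integers. -/
noncomputable def dZ (x : ℝ) : ℝ := ⨅ k : ℤ, |x - (k : ℝ)|

variable {X : Type*} [AddCommGroup X] [Module ℝ X]

/-- The difference set `D_Δ = {x - y : x, y ∈ D}`. -/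
def diffSet (D : Set X) : Set X := {u | ∃ x ∈ D, ∃ y ∈ D, u = x - y}

/-- The half difference set `(1/2)·D_Δ`. -/
def halfDiff (D : Set X) : Set X := {u | ∃ x ∈ D, ∃ y ∈ D, u = (2⁻¹ : ℝ) • (x - y)}

/-- `f` is `φ`-Jensen convex on `D`. -/
def JCW (D : Set X) (φ : X → ℝ) (f : X → ℝ) : Prop :=
  ∀ x ∈ D, ∀ y ∈ D,
    f ((2⁻¹ : ℝ) • (x + y)) ≤ 2⁻¹ * f x + 2⁻¹ * f y + φ ((2⁻¹ : ℝ) • (x - y))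

/-- `φ` is an admissible error function on `(1/2)·D_Δ`:
it is even there, vanishes at `0`, and admits a `φ`-Jensen convex function. -/
def Admissible (D : Set X) (φ : X → ℝ) : Prop :=
  (∀ u ∈ halfDiff D, φ (-u) = φ u) ∧ φ 0 = 0 ∧ ∃ f : X → ℝ, JCW D φ f

/-- `φ*(u) = inf_{m ∈ ℕ, m ≥ 1} m² · φ(u/m)`, valued in `[-∞, ∞)` viewed inside `EReal`. -/
noncomputable def phiStar (φ : X → ℝ) (u : X) : EReal :=
  ⨅ m : ℕ+, ((((m : ℕ) : ℝ) ^ 2 * φ ((1 / ((m : ℕ) : ℝ)) • u) : ℝ) : EReal)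

/-- The real-valued version of `φ*` (equal to `φ*` wherever `φ*` is finite). -/
noncomputable def phiStarR (φ : X → ℝ) (u : X) : ℝ := (phiStar φ u).toReal

/-- The extended error function
`E[φ](λ,u) = sup { f(λx+(1-λ)y) - λf(x) - (1-λ)f(y) : f φ-Jensen convex, x,y ∈ D, x-y = u }`. -/
noncomputable def Eerr (D : Set X) (φ : X → ℝ) (l : ℝ) (u : X) : EReal :=
  sSup {c : EReal | ∃ f : X → ℝ, JCW D φ f ∧ ∃ x ∈ D, ∃ y ∈ D, x - y = u ∧
    c = ((f (l • x + (1 - l) • y) - l * f x - (1 - l) * f y : ℝ) : EReal)}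

/-! ### Auxiliary lemmas on `dZ` -/

lemma dZ_bdd (x : ℝ) : BddBelow (Set.range fun k : ℤ => |x - (k : ℝ)|) :=
  ⟨0, by rintro _ ⟨k, rfl⟩; positivity⟩

lemma dZ_le (x : ℝ) (k : ℤ) : dZ x ≤ |x - (k : ℝ)| := ciInf_le (dZ_bdd x) k

lemma dZ_eq_min {x : ℝ} (hx : x ∈ Set.Icc (0:ℝ) 1) : dZ x = min x (1 - x) := by
  obtain ⟨h0, h1⟩ := hx
  refine le_antisymm (le_min ?_ ?_) (le_ciInf fun k => ?_)
  · simpa [abs_of_nonneg h0] using dZ_le x 0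
  · have := dZ_le x 1
    push_cast at this
    rw [abs_of_nonpos (by linarith)] at this
    linarith
  · rcases le_or_gt (k : ℝ) 0 with hk | hk
    · have : x ≤ |x - (k:ℝ)| := by
        rw [abs_of_nonneg (by linarith)]; linarith
      exact le_trans (min_le_left _ _) this
    · have hk1 : (1:ℝ) ≤ (k:ℝ) := by exact_mod_cast hk
      have : 1 - x ≤ |x - (k:ℝ)| := by
        rw [abs_of_nonpos (by linarith)]; linarith
      exact le_trans (min_le_right _ _) this

lemma dZ_add_int (x : ℝ) (n : ℤ) : dZ (x + (n:ℝ)) = dZ x := by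
  unfold dZ
  rw [← sInf_range, ← sInf_range]
  congr 1
  ext r
  constructor
  · rintro ⟨k, rfl⟩
    exact ⟨k - n, by push_cast; ring_nf⟩
  · rintro ⟨k, rfl⟩
    exact ⟨k + n, by push_cast; ring_nf⟩

lemma dZ_fract (x : ℝ) : dZ x = dZ (Int.fract x) := by
  conv_lhs => rw [show x = Int.fract x + (⌊x⌋ : ℝ) by rw [Int.fract]; ring]
  exact dZ_add_int _ _

/-! ### Auxiliary lemmas on `phiStar` -/

lemma phiStar_ne_top (φ : X → ℝ) (v : X) : phiStar φ v ≠ ⊤ :=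
  ne_top_of_le_ne_top (EReal.coe_ne_top _) (iInf_le _ (1 : ℕ+))

lemma le_phiStarR {φ : X → ℝ} {v : X} {r : ℝ}
    (h : ∀ m : ℕ+, r ≤ ((m : ℕ) : ℝ) ^ 2 * φ ((1 / ((m : ℕ) : ℝ)) • v)) :
    r ≤ phiStarR φ v := by
  have h1 : ((r : ℝ) : EReal) ≤ phiStar φ v :=
    le_iInf fun m => EReal.coe_le_coe_iff.mpr (h m)
  have hbot : phiStar φ v ≠ ⊥ := by
    intro hb
    rw [hb] at h1
    exact absurd (le_bot_iff.mp h1) (EReal.coe_ne_bot r)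
  rw [← EReal.coe_toReal (phiStar_ne_top φ v) hbot] at h1
  exact EReal.coe_le_coe_iff.mp h1

/-! ### Subdivision lemma -/

lemma jcw_scale {D : Set X} (hD : Convex ℝ D) {φ f : X → ℝ} (hf : JCW D φ f) (m : ℕ+) :
    JCW D (fun v => ((m : ℕ) : ℝ) ^ 2 * φ ((1 / ((m : ℕ) : ℝ)) • v)) f := by
  intro x hx y hy
  set n : ℕ := 2 * (m : ℕ) with hn
  have hn0 : 0 < (n : ℝ) := by positivity
  set t : ℝ := 1 / (n : ℝ) with ht
  set p : ℕ → X := fun j => x + ((j : ℝ) * t) • (y - x) with hp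
  have hmem : ∀ j, j ≤ n → p j ∈ D := by
    intro j hj
    have h1 : 0 ≤ (j : ℝ) * t := by positivity
    have h2 : (j : ℝ) * t ≤ 1 := by
      rw [ht]
      rw [mul_one_div, div_le_one hn0]
      exact_mod_cast hj
    have := hD hx hy (by linarith : (0:ℝ) ≤ 1 - (j:ℝ)*t) h1 (by ring)
    convert this using 1
    simp only [hp]
    module
  set h : ℕ → ℝ := fun j => f (p j) with hh
  set c : ℝ := φ (t • (x - y)) with hc
  have step : ∀ j, j + 2 ≤ n → h (j+1) ≤ 2⁻¹ * h j + 2⁻¹ * h (j+2) + c := by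
    intro j hj
    have e1 : (2⁻¹ : ℝ) • (p j + p (j+2)) = p (j+1) := by
      simp only [hp]; push_cast; module
    have e2 : (2⁻¹ : ℝ) • (p j - p (j+2)) = t • (x - y) := by
      simp only [hp]; push_cast; module
    have := hf (p j) (hmem j (by omega)) (p (j+2)) (hmem (j+2) hj)
    rw [e1, e2] at this
    exact this
  set d : ℕ → ℝ := fun j => h (j+1) - h j with hd
  have dstep : ∀ j, j + 2 ≤ n → d j - 2*c ≤ d (j+1) := by
    intro j hj
    have := step j hj
    simp only [hd]
    linarith
  have dshift : ∀ i j, j + i + 1 ≤ n → d j - 2*(i:ℝ)*c ≤ d (j + i) := by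
    intro i
    induction i with
    | zero => intro j hj; simp
    | succ i ih =>
      intro j hj
      have h1 := ih j (by omega)
      have h2 := dstep (j + i) (by omega)
      have : j + (i + 1) = (j + i) + 1 := by omega
      rw [this]
      push_cast
      linarith
  have t1 : ∑ j ∈ Finset.range (m : ℕ), d j = h (m : ℕ) - h 0 :=
    Finset.sum_range_sub h (m : ℕ)
  have t2 : ∑ j ∈ Finset.range (m : ℕ), d (j + (m : ℕ)) = h n - h (m : ℕ) := by
    have := Finset.sum_range_sub (fun j => h (j + (m : ℕ))) (m : ℕ)
    simp only [hd]
    rw [show (m : ℕ) + (m : ℕ) = n by omega, zero_add] at this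
    rw [← this]
    apply Finset.sum_congr rfl
    intro j _
    congr 2
    omega
  have key : h (m : ℕ) - h 0 - (h n - h (m : ℕ)) ≤ 2 * ((m:ℕ):ℝ)^2 * c := by
    rw [← t1, ← t2, ← Finset.sum_sub_distrib]
    have hb : ∀ j ∈ Finset.range (m : ℕ), d j - d (j + (m:ℕ)) ≤ 2*((m:ℕ):ℝ)*c := by
      intro j hj
      rw [Finset.mem_range] at hj
      have := dshift (m : ℕ) j (by omega)
      linarith
    calc ∑ j ∈ Finset.range (m:ℕ), (d j - d (j + (m:ℕ)))
        ≤ ∑ _j ∈ Finset.range (m:ℕ), 2*((m:ℕ):ℝ)*c := Finset.sum_le_sum hb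
      _ = 2 * ((m:ℕ):ℝ)^2 * c := by
          rw [Finset.sum_const, Finset.card_range, nsmul_eq_mul]; ring
  have ep0 : p 0 = x := by simp [hp]
  have epn : p n = y := by
    simp only [hp]
    have : (n : ℝ) * t = 1 := by
      rw [ht]; field_simp
    rw [this]; module
  have epm : p (m : ℕ) = (2⁻¹ : ℝ) • (x + y) := by
    simp only [hp]
    have : ((m:ℕ) : ℝ) * t = 2⁻¹ := by
      rw [ht, hn]; push_cast; rw [mul_one_div]
      rw [div_eq_iff (by positivity)]
      ring
    rw [this]; module
  have earg : (1 / ((m : ℕ) : ℝ)) • ((2⁻¹ : ℝ) • (x - y)) = t • (x - y) := by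
    rw [smul_smul, ht, hn]
    push_cast
    congr 1
    rw [one_div, mul_comm]
    rw [← mul_inv]
    congr 2
    ring
  show f ((2⁻¹:ℝ) • (x+y)) ≤ 2⁻¹ * f x + 2⁻¹ * f y +
    ((m:ℕ):ℝ)^2 * φ ((1 / ((m:ℕ):ℝ)) • ((2⁻¹:ℝ) • (x - y)))
  rw [earg, ← epm]
  show f (p (m:ℕ)) ≤ 2⁻¹ * f x + 2⁻¹ * f y + ((m:ℕ):ℝ)^2 * c
  have hm : h (m:ℕ) = f (p (m:ℕ)) := rfl
  rw [← hm]
  have e0 : h 0 = f x := by show f (p 0) = f x; rw [ep0]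
  have en : h n = f y := by show f (p n) = f y; rw [epn]
  rw [e0, en] at key
  linarith

/-! ### The chord error function and the one-step inequality -/

/-- The chord error `A(μ) = f(μx+(1-μ)y) - μ f(x) - (1-μ) f(y)`. -/
noncomputable def Afun (f : X → ℝ) (x y : X) (μ : ℝ) : ℝ :=
  f (μ • x + (1 - μ) • y) - μ * f x - (1 - μ) * f y

lemma Afun_one (f : X → ℝ) (x y : X) : Afun f x y 1 = 0 := by
  simp [Afun]

lemma Afun_zero (f : X → ℝ) (x y : X) : Afun f x y 0 = 0 := by
  simp [Afun]

lemma Afun_fract (f : X → ℝ) (x y : X) {μ : ℝ} (hμ : μ ∈ Set.Icc (0:ℝ) 1) :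
    Afun f x y (Int.fract μ) = Afun f x y μ := by
  rcases lt_or_eq_of_le hμ.2 with h | h
  · rw [Int.fract_eq_self.mpr ⟨hμ.1, h⟩]
  · rw [h, Int.fract_one, Afun_zero, Afun_one]

lemma onestep_psi {D : Set X} (hD : Convex ℝ D) {ψ f : X → ℝ} (hf : JCW D ψ f)
    {x y : X} (hx : x ∈ D) (hy : y ∈ D) {μ : ℝ} (hμ : μ ∈ Set.Icc (0:ℝ) 1) :
    Afun f x y μ ≤ 2⁻¹ * Afun f x y (Int.fract (2*μ)) + ψ (dZ μ • (x - y)) := by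
  obtain ⟨h0, h1⟩ := hμ
  rcases le_or_gt μ 2⁻¹ with hhalf | hhalf
  · -- μ ≤ 1/2
    have hdZ : dZ μ = μ := by
      rw [dZ_eq_min ⟨h0, h1⟩]; exact min_eq_left (by linarith)
    set ν : ℝ := 2 * μ with hν
    have hν01 : ν ∈ Set.Icc (0:ℝ) 1 := ⟨by linarith, by linarith⟩
    set w : X := ν • x + (1 - ν) • y with hw
    have hwD : w ∈ D := hD hx hy (by linarith) (by linarith) (by ring)
    have e1 : (2⁻¹ : ℝ) • (w + y) = μ • x + (1 - μ) • y := by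
      simp only [hw, hν]; module
    have e2 : (2⁻¹ : ℝ) • (w - y) = μ • (x - y) := by
      simp only [hw, hν]; module
    have key := hf w hwD y hy
    rw [e1, e2] at key
    rw [Afun_fract f x y hν01, hdZ]
    show f (μ • x + (1 - μ) • y) - μ * f x - (1 - μ) * f y ≤
      2⁻¹ * (f w - ν * f x - (1 - ν) * f y) + ψ (μ • (x - y))
    rw [hν]
    linarith [key]
  · -- μ > 1/2
    have hdZ : dZ μ = 1 - μ := by
      rw [dZ_eq_min ⟨h0, h1⟩]; exact min_eq_right (by linarith)
    set ν : ℝ := 2 * μ - 1 with hν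
    have hν01 : ν ∈ Set.Icc (0:ℝ) 1 := ⟨by linarith, by linarith⟩
    set w : X := ν • x + (1 - ν) • y with hw
    have hwD : w ∈ D := hD hx hy (by linarith) (by linarith) (by ring)
    have e1 : (2⁻¹ : ℝ) • (x + w) = μ • x + (1 - μ) • y := by
      simp only [hw, hν]; module
    have e2 : (2⁻¹ : ℝ) • (x - w) = (1 - μ) • (x - y) := by
      simp only [hw, hν]; module
    have key := hf x hx w hwD
    rw [e1, e2] at key
    have efr : Int.fract (2 * μ) = Int.fract ν := by
      rw [hν]
      rw [show (2*μ - 1 : ℝ) = 2*μ - ((1:ℤ):ℝ) by push_cast; ring]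
      rw [Int.fract_sub_intCast]
    rw [efr, Afun_fract f x y hν01, hdZ]
    show f (μ • x + (1 - μ) • y) - μ * f x - (1 - μ) * f y ≤
      2⁻¹ * (f w - ν * f x - (1 - ν) * f y) + ψ ((1 - μ) • (x - y))
    rw [hν]
    linarith [key]

lemma onestep_star {D : Set X} (hD : Convex ℝ D) {φ f : X → ℝ} (hf : JCW D φ f)
    {x y : X} (hx : x ∈ D) (hy : y ∈ D) {μ : ℝ} (hμ : μ ∈ Set.Icc (0:ℝ) 1) :
    Afun f x y μ ≤ 2⁻¹ * Afun f x y (Int.fract (2*μ)) + phiStarR φ (dZ μ • (x - y)) := by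
  have hr : ∀ m : ℕ+,
      Afun f x y μ - 2⁻¹ * Afun f x y (Int.fract (2*μ)) ≤
        ((m : ℕ) : ℝ) ^ 2 * φ ((1 / ((m : ℕ) : ℝ)) • (dZ μ • (x - y))) := by
    intro m
    have := onestep_psi hD (jcw_scale hD hf m) hx hy hμ
    linarith
  have := le_phiStarR hr
  linarith

/-! ### Iteration -/

lemma fract_double (z : ℝ) : Int.fract (2 * Int.fract z) = Int.fract (2 * z) := by
  have e : 2 * Int.fract z = 2 * z - ((2 * ⌊z⌋ : ℤ) : ℝ) := by
    rw [Int.fract]; push_cast; ring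
  rw [e, Int.fract_sub_intCast]

lemma iter_bound {D : Set X} (hD : Convex ℝ D) {φ f : X → ℝ} (hf : JCW D φ f)
    {x y : X} (hx : x ∈ D) (hy : y ∈ D) {l : ℝ} (hl : l ∈ Set.Icc (0:ℝ) 1) (n : ℕ) :
    Afun f x y l ≤
      (∑ k ∈ Finset.range n, (1/2:ℝ)^k * phiStarR φ (dZ (2^k * l) • (x - y)))
        + (1/2:ℝ)^n * Afun f x y (Int.fract (2^n * l)) := by
  induction n with
  | zero =>
    simp only [Finset.range_zero, Finset.sum_empty, pow_zero, one_mul, zero_add]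
    rw [Afun_fract f x y hl]
  | succ n ih =>
    have hfr : Int.fract (2^n * l) ∈ Set.Icc (0:ℝ) 1 :=
      ⟨Int.fract_nonneg _, le_of_lt (Int.fract_lt_one _)⟩
    have hstep := onestep_star hD hf hx hy hfr
    have e1 : dZ (Int.fract (2^n * l)) = dZ (2^n * l) := (dZ_fract _).symm
    have e2 : Int.fract (2 * Int.fract (2^n * l)) = Int.fract (2^(n+1) * l) := by
      rw [fract_double]
      congr 1
      ring
    rw [e1, e2] at hstep
    have hpow : (0:ℝ) ≤ (1/2:ℝ)^n := by positivity
    calc Afun f x y l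
        ≤ (∑ k ∈ Finset.range n, (1/2:ℝ)^k * phiStarR φ (dZ (2^k * l) • (x - y)))
            + (1/2:ℝ)^n * Afun f x y (Int.fract (2^n * l)) := ih
      _ ≤ (∑ k ∈ Finset.range n, (1/2:ℝ)^k * phiStarR φ (dZ (2^k * l) • (x - y)))
            + (1/2:ℝ)^n * (2⁻¹ * Afun f x y (Int.fract (2^(n+1) * l))
                + phiStarR φ (dZ (2^n * l) • (x - y))) := by
          exact add_le_add_right (mul_le_mul_of_nonneg_left hstep hpow) _
      _ = (∑ k ∈ Finset.range (n+1), (1/2:ℝ)^k * phiStarR φ (dZ (2^k * l) • (x - y)))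
            + (1/2:ℝ)^(n+1) * Afun f x y (Int.fract (2^(n+1) * l)) := by
          rw [Finset.sum_range_succ]
          ring

/-! ### The orbit of a rational point under doubling is finite -/

lemma orbit_mem {l : ℝ} (q : ℚ) (hql : (q : ℝ) = l) (k : ℕ) :
    ∃ j : ℕ, j < q.den ∧ Int.fract (2^k * l) = (j : ℝ) / (q.den : ℝ) := by
  set b : ℕ := q.den with hb
  have hb0 : 0 < b := q.pos
  have hbR : (0:ℝ) < (b:ℝ) := by exact_mod_cast hb0
  have hbl : (b : ℝ) * l = (q.num : ℝ) := by
    rw [← hql, Rat.cast_def]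
    field_simp
    rw [hb]; ring
  set z : ℤ := 2^k * q.num - (b : ℤ) * ⌊2^k * l⌋ with hz
  have hzR : ((z : ℤ) : ℝ) = (b : ℝ) * Int.fract (2^k * l) := by
    have e : (b:ℝ) * Int.fract (2^k*l) = 2^k * ((b:ℝ)*l) - (b:ℝ)*((⌊2^k*l⌋:ℤ):ℝ) := by
      rw [Int.fract]; ring
    rw [e, hbl, hz]
    push_cast
    ring
  have hfr0 : (0:ℝ) ≤ Int.fract (2^k * l) := Int.fract_nonneg _
  have hfr1 : Int.fract (2^k * l) < 1 := Int.fract_lt_one _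
  have hz0 : 0 ≤ z := by
    have : (0:ℝ) ≤ ((z:ℤ):ℝ) := by rw [hzR]; positivity
    exact_mod_cast this
  have hz1 : z < (b : ℤ) := by
    have : ((z:ℤ):ℝ) < (b:ℝ) := by
      rw [hzR]
      calc (b:ℝ) * Int.fract (2^k*l) < (b:ℝ) * 1 := by
            exact mul_lt_mul_of_pos_left hfr1 hbR
        _ = (b:ℝ) := mul_one _
    exact_mod_cast this
  refine ⟨z.toNat, ?_, ?_⟩
  · omega
  · rw [eq_div_iff (ne_of_gt hbR)]
    have e : ((z.toNat : ℕ) : ℝ) = ((z : ℤ) : ℝ) := by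
      exact_mod_cast Int.toNat_of_nonneg hz0
    rw [e, hzR]
    ring

lemma bdd_on_orbit {l : ℝ} (q : ℚ) (hql : (q : ℝ) = l) (g : ℝ → ℝ) :
    ∃ C : ℝ, ∀ k : ℕ, g (Int.fract (2^k * l)) ≤ C := by
  set T : Finset ℝ := (Finset.range q.den).image (fun j : ℕ => (j : ℝ) / (q.den : ℝ)) with hT
  have hTne : (T.image g).Nonempty := by
    apply Finset.Nonempty.image
    apply Finset.Nonempty.image
    rw [Finset.nonempty_range_iff]
    exact Nat.pos_iff_ne_zero.mp q.pos
  refine ⟨(T.image g).max' hTne, fun k => ?_⟩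
  obtain ⟨j, hj, hjk⟩ := orbit_mem q hql k
  apply Finset.le_max'
  apply Finset.mem_image_of_mem
  rw [hjk, hT]
  exact Finset.mem_image_of_mem _ (Finset.mem_range.mpr hj)

/-! ### Main theorem -/

/-- for rational `λ ∈ [0,1]` and `u ∈ D_Δ`, the Takagi-type series
`∑ 2^{-k} φ*(d_ℤ(2^k λ)·u)` converges absolutely and bounds `E[φ](λ,u)` from above. -/
theorem stmt19 {X : Type*} [AddCommGroup X] [Module ℝ X] (D : Set X)
    (hD : Convex ℝ D) (hne : D.Nonempty) (φ : X → ℝ) (hφ : Admissible D φ)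
    (l : ℝ) (hl : l ∈ Set.Icc (0 : ℝ) 1) (hrat : ∃ q : ℚ, (q : ℝ) = l)
    (u : X) (hu : u ∈ diffSet D) :
    Summable (fun k : ℕ => |(1 / 2 : ℝ) ^ k * phiStarR φ (dZ (2 ^ k * l) • u)|) ∧
    Eerr D φ l u ≤
      ((∑' k : ℕ, (1 / 2 : ℝ) ^ k * phiStarR φ (dZ (2 ^ k * l) • u) : ℝ) : EReal) := by
  obtain ⟨q, hql⟩ := hrat
  -- the terms of the series, seen through the orbit of `l` under doubling
  set a : ℕ → ℝ := fun k => (1/2:ℝ)^k * phiStarR φ (dZ (2^k * l) • u) with ha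
  have hdZk : ∀ k : ℕ, dZ (2^k * l) = dZ (Int.fract (2^k * l)) := fun k => dZ_fract _
  -- summability
  obtain ⟨C, hC⟩ := bdd_on_orbit q hql (fun t => |phiStarR φ (dZ t • u)|)
  have habs : ∀ k : ℕ, |a k| ≤ (1/2:ℝ)^k * C := by
    intro k
    rw [ha]
    simp only []
    rw [abs_mul, abs_of_nonneg (by positivity : (0:ℝ) ≤ (1/2:ℝ)^k)]
    apply mul_le_mul_of_nonneg_left _ (by positivity)
    rw [hdZk k]
    exact hC k
  have hgeom : Summable (fun k : ℕ => (1/2:ℝ)^k * C) :=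
    (summable_geometric_of_lt_one (by norm_num) (by norm_num)).mul_right C
  have hsummable : Summable (fun k : ℕ => |a k|) :=
    Summable.of_nonneg_of_le (fun k => abs_nonneg _) habs hgeom
  refine ⟨hsummable, ?_⟩
  have hsum : Summable a := hsummable.of_abs
  -- the bound on Eerr
  apply sSup_le
  rintro c ⟨f, hf, x, hx, y, hy, hxy, rfl⟩
  rw [EReal.coe_le_coe_iff]
  subst hxy
  -- tail bound
  obtain ⟨C2, hC2⟩ := bdd_on_orbit q hql (fun t => |Afun f x y t|)
  have htail : Filter.Tendsto (fun n : ℕ => (1/2:ℝ)^n * Afun f x y (Int.fract (2^n * l)))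
      Filter.atTop (nhds 0) := by
    apply squeeze_zero_norm (a := fun n : ℕ => (1/2:ℝ)^n * C2)
    · intro n
      rw [Real.norm_eq_abs, abs_mul, abs_of_nonneg (by positivity : (0:ℝ) ≤ (1/2:ℝ)^n)]
      exact mul_le_mul_of_nonneg_left (hC2 n) (by positivity)
    · have := (tendsto_pow_atTop_nhds_zero_of_lt_one
        (by norm_num : (0:ℝ) ≤ 1/2) (by norm_num : (1/2:ℝ) < 1)).mul_const C2
      simpa using this
  have hpartial : Filter.Tendsto (fun n : ℕ => ∑ k ∈ Finset.range n, a k)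
      Filter.atTop (nhds (∑' k, a k)) := hsum.hasSum.tendsto_sum_nat
  have hcomb : Filter.Tendsto
      (fun n : ℕ => (∑ k ∈ Finset.range n, a k)
        + (1/2:ℝ)^n * Afun f x y (Int.fract (2^n * l)))
      Filter.atTop (nhds (∑' k, a k)) := by
    have := hpartial.add htail
    simpa using this
  have hineq : ∀ n : ℕ, Afun f x y l ≤ (∑ k ∈ Finset.range n, a k)
      + (1/2:ℝ)^n * Afun f x y (Int.fract (2^n * l)) := fun n =>
    iter_bound hD hf hx hy hl n
  have := ge_of_tendsto' hcomb hineq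
  exact this
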